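/- Let x_1, ..., x_m be distinct vectors in the Euclidean plane ℝ² with ‖x_i + x_j‖ = 1 for all i ≠ j. Then m ≤ 4, and this bound is attained (e.g., by three unit vectors at mutual angles 120° together with the origin, suitably scaled). -/

import Mathlib

set_option maxHeartbeats 1000000 in
private lemma circle_aux (c0 c1 d0 d1 p0 p1 q0 q1 r0 r1 : ℝ)
    (hv : ¬ (d0 - c0 = 0 ∧ d1 - c1 = 0))
    (hp : (p0-c0)^2+(p1-c1)^2 = 1) (hp' : (p0-d0)^2+(p1-d1)^2 = 1)
    (hq : (q0-c0)^2+(q1-c1)^2 = 1) (hq' : (q0-d0)^2+(q1-d1)^2 = 1)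
    (hr : (r0-c0)^2+(r1-c1)^2 = 1) (hr' : (r0-d0)^2+(r1-d1)^2 = 1)
    (hpq : ¬(p0 = q0 ∧ p1 = q1)) (hqr : ¬(q0 = r0 ∧ q1 = r1)) :
    p0 = r0 ∧ p1 = r1 := by
  have hav : (p0-q0)*(d0-c0) + (p1-q1)*(d1-c1) = 0 := by
    linear_combination (hp - hp' - hq + hq')/2
  have hbv : (q0-r0)*(d0-c0) + (q1-r1)*(d1-c1) = 0 := by
    linear_combination (hq - hq' - hr + hr')/2
  have hcross : (p0-q0)*(q1-r1) - (p1-q1)*(q0-r0) = 0 := by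
    rcases not_and_or.mp hv with h0 | h1
    · have h : ((p0-q0)*(q1-r1) - (p1-q1)*(q0-r0)) * (d0-c0) = 0 := by
        linear_combination (q1-r1)*hav - (p1-q1)*hbv
      exact (mul_eq_zero.mp h).resolve_right h0
    · have h : ((p0-q0)*(q1-r1) - (p1-q1)*(q0-r0)) * (d1-c1) = 0 := by
        linear_combination -(q0-r0)*hav + (p0-q0)*hbv
      exact (mul_eq_zero.mp h).resolve_right h1
  have hA : 0 < (p0-q0)^2 + (p1-q1)^2 := by
    rcases not_and_or.mp hpq with h | h
    · have h2 : 0 < (p0-q0)^2 := pow_two_pos_of_ne_zero (sub_ne_zero.mpr h)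
      linarith [sq_nonneg (p1-q1)]
    · have h2 : 0 < (p1-q1)^2 := pow_two_pos_of_ne_zero (sub_ne_zero.mpr h)
      linarith [sq_nonneg (p0-q0)]
  have hB : 0 < (q0-r0)^2 + (q1-r1)^2 := by
    rcases not_and_or.mp hqr with h | h
    · have h2 : 0 < (q0-r0)^2 := pow_two_pos_of_ne_zero (sub_ne_zero.mpr h)
      linarith [sq_nonneg (q1-r1)]
    · have h2 : 0 < (q1-r1)^2 := pow_two_pos_of_ne_zero (sub_ne_zero.mpr h)
      linarith [sq_nonneg (q0-r0)]
  have E1 : (p0-q0)^2 + (p1-q1)^2 + 2*((q0-c0)*(p0-q0) + (q1-c1)*(p1-q1)) = 0 := by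
    linear_combination hp - hq
  have E2 : 2*((q0-c0)*(q0-r0) + (q1-c1)*(q1-r1)) - ((q0-r0)^2 + (q1-r1)^2) = 0 := by
    linear_combination hq - hr
  have h3 : ((q0-c0)*(q0-r0) + (q1-c1)*(q1-r1)) * ((p0-q0)^2+(p1-q1)^2)
      = ((q0-c0)*(p0-q0)+(q1-c1)*(p1-q1)) * ((p0-q0)*(q0-r0)+(p1-q1)*(q1-r1)) := by
    linear_combination ((q1-c1)*(p0-q0) - (q0-c0)*(p1-q1)) * hcross
  have h4 : (q0-c0)*(q0-r0) + (q1-c1)*(q1-r1)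
      = -((p0-q0)*(q0-r0)+(p1-q1)*(q1-r1))/2 := by
    apply mul_right_cancel₀ (ne_of_gt hA)
    linear_combination h3 + ((p0-q0)*(q0-r0)+(p1-q1)*(q1-r1))/2 * E1
  have h5 : (q0-r0)*(p0-r0) + (q1-r1)*(p1-r1) = 0 := by
    linear_combination 2*h4 - E2
  have h6 : (q0-r0)*(p1-r1) - (q1-r1)*(p0-r0) = 0 := by
    linear_combination -hcross
  have hw0 : (p0 - r0) * ((q0-r0)^2+(q1-r1)^2) = 0 := by
    linear_combination (q0-r0)*h5 - (q1-r1)*h6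
  have hw1 : (p1 - r1) * ((q0-r0)^2+(q1-r1)^2) = 0 := by
    linear_combination (q1-r1)*h5 + (q0-r0)*h6
  constructor
  · have := (mul_eq_zero.mp hw0).resolve_right (ne_of_gt hB)
    linarith
  · have := (mul_eq_zero.mp hw1).resolve_right (ne_of_gt hB)
    linarith

private lemma norm_sq_two (z : EuclideanSpace ℝ (Fin 2)) : ‖z‖^2 = z 0^2 + z 1^2 := by
  rw [EuclideanSpace.norm_eq, Real.sq_sqrt (by positivity)]
  simp [Fin.sum_univ_two, sq_abs]

set_option maxHeartbeats 1000000 in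
theorem euclidean_plane_midpoint_bound :
    (∀ (m : ℕ) (x : Fin m → EuclideanSpace ℝ (Fin 2)),
      Function.Injective x → (∀ i j, i ≠ j → ‖x i + x j‖ = 1) → m ≤ 4) ∧
    ∃ x : Fin 4 → EuclideanSpace ℝ (Fin 2),
      Function.Injective x ∧ ∀ i j, i ≠ j → ‖x i + x j‖ = 1 := by
  constructor
  · intro m x hinj hnorm
    by_contra hm
    push_neg at hm
    have h5 : 5 ≤ m := hm
    set y : Fin 5 → EuclideanSpace ℝ (Fin 2) := fun i => x (Fin.castLE h5 i) with hy
    have hyinj : Function.Injective y := fun a b h =>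
      Fin.castLE_injective h5 (hinj h)
    have hynorm : ∀ i j : Fin 5, i ≠ j →
        (y i 0 + y j 0)^2 + (y i 1 + y j 1)^2 = 1 := by
      intro i j hij
      have h1 : ‖y i + y j‖ = 1 := hnorm _ _ (fun h => hij (Fin.castLE_injective h5 h))
      have h2 := norm_sq_two (y i + y j)
      rw [h1] at h2
      have ha : (y i + y j) 0 = y i 0 + y j 0 := rfl
      have hb : (y i + y j) 1 = y i 1 + y j 1 := rfl
      rw [ha, hb] at h2
      linarith
    have hne : ∀ i j : Fin 5, i ≠ j → ¬(y i 0 = y j 0 ∧ y i 1 = y j 1) := by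
      intro i j hij h
      apply hij
      apply hyinj
      ext k
      fin_cases k
      · exact h.1
      · exact h.2
    have key := circle_aux (-(y 0 0)) (-(y 0 1)) (-(y 1 0)) (-(y 1 1))
      (y 2 0) (y 2 1) (y 3 0) (y 3 1) (y 4 0) (y 4 1)
      (by
        intro h
        apply hne 1 0 (by decide)
        constructor <;> linarith [h.1, h.2])
      (by have := hynorm 2 0 (by decide); linarith [this])
      (by have := hynorm 2 1 (by decide); linarith [this])
      (by have := hynorm 3 0 (by decide); linarith [this])
      (by have := hynorm 3 1 (by decide); linarith [this])
      (by have := hynorm 4 0 (by decide); linarith [this])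
      (by have := hynorm 4 1 (by decide); linarith [this])
      (hne 2 3 (by decide)) (hne 3 4 (by decide))
    exact hne 2 4 (by decide) key
  · have hs : Real.sqrt 3 ^ 2 = 3 := Real.sq_sqrt (by norm_num)
    have hs0 : (0:ℝ) < Real.sqrt 3 := Real.sqrt_pos.mpr (by norm_num)
    refine ⟨fun i => (WithLp.equiv 2 (Fin 2 → ℝ)).symm
      (![![0,0], ![1,0], ![-(1/2), Real.sqrt 3/2], ![-(1/2), -(Real.sqrt 3/2)]] i), ?_, ?_⟩
    · intro a b hab
      have h0 : (![![(0:ℝ),0], ![1,0], ![-(1/2), Real.sqrt 3/2],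
          ![-(1/2), -(Real.sqrt 3/2)]] a) 0
          = (![![(0:ℝ),0], ![1,0], ![-(1/2), Real.sqrt 3/2],
          ![-(1/2), -(Real.sqrt 3/2)]] b) 0 :=
        congrFun ((WithLp.equiv 2 (Fin 2 → ℝ)).symm.injective hab) 0
      have h1 : (![![(0:ℝ),0], ![1,0], ![-(1/2), Real.sqrt 3/2],
          ![-(1/2), -(Real.sqrt 3/2)]] a) 1
          = (![![(0:ℝ),0], ![1,0], ![-(1/2), Real.sqrt 3/2],
          ![-(1/2), -(Real.sqrt 3/2)]] b) 1 :=
        congrFun ((WithLp.equiv 2 (Fin 2 → ℝ)).symm.injective hab) 1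
      clear hab
      fin_cases a <;> fin_cases b <;>
        first
          | rfl
          | (exfalso; revert h0 h1; norm_num <;> nlinarith [hs0])
    · intro i j hij
      have key : ∀ z : EuclideanSpace ℝ (Fin 2), z 0^2 + z 1^2 = 1 → ‖z‖ = 1 := by
        intro z h
        have h2 := norm_sq_two z
        nlinarith [norm_nonneg z]
      apply key
      have ha : ∀ (u v : EuclideanSpace ℝ (Fin 2)) (k : Fin 2), (u + v) k = u k + v k :=
        fun _ _ _ => rfl
      rw [ha, ha]
      simp only [WithLp.equiv_symm_apply, PiLp.toLp_apply]
      fin_cases i <;> fin_cases j <;>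
        first
          | exact absurd rfl hij
          | (norm_num; try nlinarith [hs])
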